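/- arXiv:2602.19342 — 8 statements merged into one kernel-verified Lean document; each statement's English description precedes it below -/
import Mathlib

section
/- Let A be a ring, σ: A → M_n(A) a ring homomorphism, and δ = (δ_1,…,δ_n) a sequence of additive maps A → A. The multiplication on S = A[t_1,…,t_n; σ, δ] defined by the commutation rules t_i a = Σ_j σ(a)_{ij} t_j + δ_i(a) is associative if and only if for all a, b ∈ A and all i, δ_i(ab) = Σ_j σ(a)_{ij} δ_j(b) + δ_i(a) b. -/
namespace Stmt0

variable {A : Type*} [Ring A] {n : ℕ}

/-- Left action of the variable `t i` on a polynomial (an element of the free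
left `A`-module on the free monoid on the variables), following the commutation
rule `t i * (x • w) = (∑ j, σ x i j • (t j * w)) + δ i x • w`. -/
noncomputable def tiMul (σ : A →+* Matrix (Fin n) (Fin n) A) (δ : Fin n → A →+ A)
    (i : Fin n) (f : FreeMonoid (Fin n) →₀ A) : FreeMonoid (Fin n) →₀ A :=
  f.sum fun w x =>
    (∑ j, Finsupp.single (FreeMonoid.of j * w) (σ x i j)) + Finsupp.single w (δ i x)

/-- Left multiplication by the monomial `w = t_{i₁} ⋯ t_{i_l}`. -/
noncomputable def wordMul (σ : A →+* Matrix (Fin n) (Fin n) A) (δ : Fin n → A →+ A)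
    (w : FreeMonoid (Fin n)) (f : FreeMonoid (Fin n) →₀ A) : FreeMonoid (Fin n) →₀ A :=
  (FreeMonoid.toList w).foldr (fun i g => tiMul σ δ i g) f

/-- The multiplication of `S = A[t₁,…,t_n; σ, δ]` determined by the commutation rules
`t_i a = ∑ j σ(a)_{ij} t_j + δ_i(a)`. -/
noncomputable def oreMul (σ : A →+* Matrix (Fin n) (Fin n) A) (δ : Fin n → A →+ A)
    (f g : FreeMonoid (Fin n) →₀ A) : FreeMonoid (Fin n) →₀ A :=
  f.sum fun w x => (wordMul σ δ w g).mapRange (fun y => x * y) (mul_zero x)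

section Lemmas
variable (σ : A →+* Matrix (Fin n) (Fin n) A) (δ : Fin n → A →+ A)


lemma mapRange_eq_smul (a : A) (f : FreeMonoid (Fin n) →₀ A) :
    f.mapRange (fun y => a * y) (mul_zero a) = a • f := by
  ext w; simp [Finsupp.mapRange_apply]

lemma tiMul_single (i : Fin n) (w : FreeMonoid (Fin n)) (x : A) :
    tiMul σ δ i (Finsupp.single w x) =
      (∑ j, Finsupp.single (FreeMonoid.of j * w) (σ x i j)) + Finsupp.single w (δ i x) := by
  unfold tiMul
  rw [Finsupp.sum_single_index]
  simp

lemma tiMul_add (i : Fin n) (f g : FreeMonoid (Fin n) →₀ A) :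
    tiMul σ δ i (f + g) = tiMul σ δ i f + tiMul σ δ i g := by
  unfold tiMul
  rw [Finsupp.sum_add_index']
  · intro w; simp
  · intro w x y
    simp [map_add, Matrix.add_apply, Finsupp.single_add, Finset.sum_add_distrib]
    abel

lemma oreMul_eq (f g : FreeMonoid (Fin n) →₀ A) :
    oreMul σ δ f g = f.sum fun w x => x • wordMul σ δ w g := by
  unfold oreMul
  exact Finsupp.sum_congr fun w _ => mapRange_eq_smul _ _

lemma oreMul_single_left (w : FreeMonoid (Fin n)) (a : A) (h : FreeMonoid (Fin n) →₀ A) :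
    oreMul σ δ (Finsupp.single w a) h = a • wordMul σ δ w h := by
  rw [oreMul_eq, Finsupp.sum_single_index]
  simp

lemma oreMul_add_left (f f' h : FreeMonoid (Fin n) →₀ A) :
    oreMul σ δ (f + f') h = oreMul σ δ f h + oreMul σ δ f' h := by
  simp only [oreMul_eq]
  rw [Finsupp.sum_add_index']
  · intro w; simp
  · intro w x y; rw [add_smul]

lemma oreMul_smul_left (a : A) (f h : FreeMonoid (Fin n) →₀ A) :
    oreMul σ δ (a • f) h = a • oreMul σ δ f h := by
  simp only [oreMul_eq]
  rw [Finsupp.sum_smul_index, Finsupp.smul_sum]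
  · simp [mul_smul]
  · intro w; simp

/-- oreMul as an additive hom in the left argument. -/
noncomputable def oreMulLeft (h : FreeMonoid (Fin n) →₀ A) :
    (FreeMonoid (Fin n) →₀ A) →+ (FreeMonoid (Fin n) →₀ A) where
  toFun f := oreMul σ δ f h
  map_zero' := by simp [oreMul_eq]
  map_add' f f' := oreMul_add_left σ δ f f' h

lemma wordMul_one (f : FreeMonoid (Fin n) →₀ A) : wordMul σ δ 1 f = f := rfl

lemma wordMul_of_mul (i : Fin n) (w : FreeMonoid (Fin n)) (f : FreeMonoid (Fin n) →₀ A) :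
    wordMul σ δ (FreeMonoid.of i * w) f = tiMul σ δ i (wordMul σ δ w f) := rfl

lemma wordMul_add (w : FreeMonoid (Fin n)) (f g : FreeMonoid (Fin n) →₀ A) :
    wordMul σ δ w (f + g) = wordMul σ δ w f + wordMul σ δ w g := by
  induction w using FreeMonoid.recOn with
  | one => rfl
  | of_mul i w ih => rw [wordMul_of_mul, wordMul_of_mul, wordMul_of_mul, ih, tiMul_add]

lemma oreMul_add_right (f g g' : FreeMonoid (Fin n) →₀ A) :
    oreMul σ δ f (g + g') = oreMul σ δ f g + oreMul σ δ f g' := by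
  simp only [oreMul_eq]
  rw [← Finsupp.sum_add]
  exact Finsupp.sum_congr fun w _ => by rw [wordMul_add, smul_add]



lemma tiMul_smul
    (hδ : ∀ (a b : A) (i : Fin n), δ i (a * b) = (∑ j, σ a i j * δ j b) + δ i a * b)
    (i : Fin n) (b : A) (f : FreeMonoid (Fin n) →₀ A) :
    tiMul σ δ i (b • f) = (∑ j, σ b i j • tiMul σ δ j f) + δ i b • f := by
  induction f using Finsupp.induction_linear with
  | zero => simp [tiMul]
  | add f g hf hg =>
      rw [smul_add, tiMul_add, hf, hg]
      simp only [tiMul_add, smul_add, Finset.sum_add_distrib]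
      abel
  | single u c =>
      rw [Finsupp.smul_single, smul_eq_mul, tiMul_single]
      simp only [tiMul_single, smul_add, Finsupp.smul_single, smul_eq_mul,
        Finset.smul_sum, Finsupp.smul_single]
      rw [map_mul σ, hδ]
      simp only [Matrix.mul_apply, Finsupp.single_add, Finset.sum_add_distrib]
      rw [Finset.sum_comm]
      simp only [← Finsupp.single_finset_sum]
      abel



lemma oreMul_sum_left {ι : Type*} (s : Finset ι) (F : ι → (FreeMonoid (Fin n) →₀ A))
    (h : FreeMonoid (Fin n) →₀ A) :
    oreMul σ δ (∑ j ∈ s, F j) h = ∑ j ∈ s, oreMul σ δ (F j) h :=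
  map_sum (oreMulLeft σ δ h) F s

lemma oreMul_tiMul
    (hδ : ∀ (a b : A) (i : Fin n), δ i (a * b) = (∑ j, σ a i j * δ j b) + δ i a * b)
    (i : Fin n) (g h : FreeMonoid (Fin n) →₀ A) :
    oreMul σ δ (tiMul σ δ i g) h = tiMul σ δ i (oreMul σ δ g h) := by
  induction g using Finsupp.induction_linear with
  | zero => simp [tiMul, oreMul]
  | add f g hf hg => rw [tiMul_add, oreMul_add_left, hf, hg, oreMul_add_left, tiMul_add]
  | single v b =>
      rw [tiMul_single, oreMul_add_left, oreMul_single_left, oreMul_sum_left]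
      simp only [oreMul_single_left, wordMul_of_mul]
      rw [tiMul_smul σ δ hδ]

lemma oreMul_wordMul
    (hδ : ∀ (a b : A) (i : Fin n), δ i (a * b) = (∑ j, σ a i j * δ j b) + δ i a * b)
    (w : FreeMonoid (Fin n)) (g h : FreeMonoid (Fin n) →₀ A) :
    oreMul σ δ (wordMul σ δ w g) h = wordMul σ δ w (oreMul σ δ g h) := by
  induction w using FreeMonoid.recOn with
  | one => rfl
  | of_mul i w ih => rw [wordMul_of_mul, oreMul_tiMul σ δ hδ, ih, wordMul_of_mul]

lemma oreMul_assoc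
    (hδ : ∀ (a b : A) (i : Fin n), δ i (a * b) = (∑ j, σ a i j * δ j b) + δ i a * b)
    (f g h : FreeMonoid (Fin n) →₀ A) :
    oreMul σ δ (oreMul σ δ f g) h = oreMul σ δ f (oreMul σ δ g h) := by
  induction f using Finsupp.induction_linear with
  | zero => simp [oreMul]
  | add f f' hf hf' => rw [oreMul_add_left, oreMul_add_left, hf, hf', oreMul_add_left]
  | single w a =>
      rw [oreMul_single_left, oreMul_smul_left, oreMul_wordMul σ δ hδ, oreMul_single_left]



lemma of_ne_one (j : Fin n) : FreeMonoid.of j ≠ 1 := by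
  intro h
  simpa using congrArg FreeMonoid.toList h

lemma wordMul_of (i : Fin n) (f : FreeMonoid (Fin n) →₀ A) :
    wordMul σ δ (FreeMonoid.of i) f = tiMul σ δ i f := rfl

lemma single_of_apply_one (j : Fin n) (c : A) :
    (Finsupp.single (M := A) (FreeMonoid.of j) c) 1 = 0 :=
  Finsupp.single_eq_of_ne' (of_ne_one j)

lemma assoc_implies
    (H : ∀ f g h : FreeMonoid (Fin n) →₀ A,
        oreMul σ δ (oreMul σ δ f g) h = oreMul σ δ f (oreMul σ δ g h))
    (a b : A) (i : Fin n) : δ i (a * b) = (∑ j, σ a i j * δ j b) + δ i a * b := by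
  have h1 := H (Finsupp.single (FreeMonoid.of i) (1 : A)) (Finsupp.single 1 a)
    (Finsupp.single 1 b)
  simp only [oreMul_single_left, one_smul, wordMul_of, wordMul_one, tiMul_single, mul_one,
    Finsupp.smul_single, smul_eq_mul, oreMul_add_left, oreMul_sum_left, smul_add,
    Finset.smul_sum] at h1
  have h2 := DFunLike.congr_fun h1 1
  simp only [Finsupp.add_apply, Finsupp.finset_sum_apply, single_of_apply_one,
    Finset.sum_const_zero, zero_add, add_zero, Finsupp.single_eq_same] at h2
  exact h2.symm


end Lemmas

/-- The multiplication defined by the commutation rules is associative if and only if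
`δ_i (a b) = ∑ j σ(a)_{ij} δ_j(b) + δ_i(a) b` for all `a b` and `i`. -/
theorem oreMul_assoc_iff (σ : A →+* Matrix (Fin n) (Fin n) A) (δ : Fin n → A →+ A) :
    (∀ f g h : FreeMonoid (Fin n) →₀ A,
        oreMul σ δ (oreMul σ δ f g) h = oreMul σ δ f (oreMul σ δ g h)) ↔
    (∀ (a b : A) (i : Fin n), δ i (a * b) = (∑ j, σ a i j * δ j b) + δ i a * b) :=
  ⟨assoc_implies σ δ, fun hδ => oreMul_assoc σ δ hδ⟩

end Stmt0
end

section
/- Let A be a ring, σ: A → M_n(A) a ring homomorphism with associated σ-derivation δ: A → A^n, and let V be a left A-module. Given a sequence T = (T_1,…,T_n) of additive endomorphisms of V satisfying T_i(a·v) = Σ_j σ(a)_{ij} T_j(v) + δ_i(a)·v for all a ∈ A, v ∈ V (a (σ,δ)-pseudo-multilinear transformation), the assignment t_i · v = T_i(v) extends the A-module structure on V to a left module structure over S = A[t_1,…,t_n; σ, δ]. Conversely, every left S-module structure on V restricting to the given A-module structure arises this way, and the two constructions are mutually inverse. -/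
structure OreExtension (A : Type*) [Ring A] (n : ℕ)
    (σ : A →+* Matrix (Fin n) (Fin n) A) (δ : Fin n → A →+ A) : Type _ where
  S : Type*
  [ringS : Ring S]
  ι : A →+* S
  t : Fin n → S
  commute_rule : ∀ (i : Fin n) (a : A),
    t i * ι a = (∑ j, ι (σ a i j) * t j) + ι (δ i a)
  unique_repr : ∀ s : S, ∃! c : FreeMonoid (Fin n) →₀ A,
    s = c.sum fun w x => ι x * (List.map t (FreeMonoid.toList w)).prod

attribute [instance] OreExtension.ringS

section EndAux

variable {V : Type*} [AddCommGroup V]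

lemma endAdd_apply (f g : AddMonoid.End V) (v : V) : (f + g) v = f v + g v := rfl

lemma endSum_apply {α : Type*} (s : Finset α) (f : α → AddMonoid.End V) (v : V) :
    (∑ i ∈ s, f i) v = ∑ i ∈ s, f i v := by
  classical
  induction s using Finset.induction with
  | empty => simp
  | insert _ _ h ih =>
    rw [Finset.sum_insert h, Finset.sum_insert h, endAdd_apply, ih]

end EndAux

section Aux

variable {A : Type*} [Ring A] {n : ℕ}
    {σ : A →+* Matrix (Fin n) (Fin n) A} {δ : Fin n → A →+ A}
    (e : OreExtension A n σ δ)

/-- The monomial `t_w` associated with a word `w`. -/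
def OreExtension.tprod (w : FreeMonoid (Fin n)) : e.S :=
  (List.map e.t (FreeMonoid.toList w)).prod

lemma OreExtension.tprod_one : e.tprod 1 = 1 := by
  simp [OreExtension.tprod]

lemma OreExtension.tprod_cons (i : Fin n) (w : FreeMonoid (Fin n)) :
    e.tprod (FreeMonoid.of i * w) = e.t i * e.tprod w := by
  simp [OreExtension.tprod, FreeMonoid.toList_of_mul]

/-- The representation map, sending coefficients to elements of `S`. -/
noncomputable def OreExtension.repHom : (FreeMonoid (Fin n) →₀ A) →+ e.S :=
  Finsupp.liftAddHom fun w => (AddMonoidHom.mulRight (e.tprod w)).comp e.ι.toAddMonoidHom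

lemma OreExtension.repHom_apply (c : FreeMonoid (Fin n) →₀ A) :
    e.repHom c = c.sum fun w x => e.ι x * e.tprod w := rfl

lemma OreExtension.repHom_single (w : FreeMonoid (Fin n)) (x : A) :
    e.repHom (Finsupp.single w x) = e.ι x * e.tprod w := by
  rw [OreExtension.repHom_apply, Finsupp.sum_single_index]
  simp

lemma OreExtension.repHom_bijective : Function.Bijective e.repHom := by
  constructor
  · intro c c' h
    obtain ⟨c₀, _, hu⟩ := e.unique_repr (e.repHom c)
    have h1 : c = c₀ := hu c rfl
    have h2 : c' = c₀ := hu c' h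
    rw [h1, h2]
  · intro s
    obtain ⟨c, hc, _⟩ := e.unique_repr s
    exact ⟨c, hc.symm⟩

end Aux

section PMT

variable {A : Type*} [Ring A] {n : ℕ}
    {σ : A →+* Matrix (Fin n) (Fin n) A} {δ : Fin n → A →+ A}
    (e : OreExtension A n σ δ)
    {V : Type*} [AddCommGroup V] [Module A V]

/-- The product of the `T`'s along a word. -/
def Tprod (T : Fin n → AddMonoid.End V) (w : FreeMonoid (Fin n)) : AddMonoid.End V :=
  (List.map T (FreeMonoid.toList w)).prod

lemma Tprod_one (T : Fin n → AddMonoid.End V) : Tprod T (1 : FreeMonoid (Fin n)) = 1 := by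
  simp [Tprod]

lemma Tprod_cons (T : Fin n → AddMonoid.End V) (i : Fin n) (w : FreeMonoid (Fin n)) :
    Tprod T (FreeMonoid.of i * w) = T i * Tprod T w := by
  simp [Tprod, FreeMonoid.toList_of_mul]

/-- abbreviation for the scalar action endomorphism -/
noncomputable def smulEnd (a : A) : AddMonoid.End V := Module.toAddMonoidEnd A V a

lemma smulEnd_apply (a : A) (v : V) : smulEnd (V := V) a v = a • v := rfl

lemma smulEnd_mul (a b : A) :
    smulEnd (V := V) (a * b) = smulEnd a * smulEnd b := by
  simp [smulEnd, map_mul]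

/-- the analogue of `repHom` on the endomorphism side -/
noncomputable def psiHom (T : Fin n → AddMonoid.End V) :
    (FreeMonoid (Fin n) →₀ A) →+ AddMonoid.End V :=
  Finsupp.liftAddHom fun w =>
    (AddMonoidHom.mulRight (Tprod T w)).comp (Module.toAddMonoidEnd A V).toAddMonoidHom

lemma psiHom_apply (T : Fin n → AddMonoid.End V) (c : FreeMonoid (Fin n) →₀ A) :
    psiHom T c = c.sum fun w x => smulEnd x * Tprod T w := rfl

lemma psiHom_single (T : Fin n → AddMonoid.End V) (w : FreeMonoid (Fin n)) (x : A) :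
    psiHom T (Finsupp.single w x) = smulEnd x * Tprod T w := by
  rw [psiHom_apply, Finsupp.sum_single_index]
  simp [smulEnd]

/-- the candidate module-structure map -/
noncomputable def phiHom (T : Fin n → AddMonoid.End V) : e.S →+ AddMonoid.End V :=
  (psiHom T).comp (AddEquiv.ofBijective e.repHom e.repHom_bijective).symm.toAddMonoidHom

lemma phiHom_rep (T : Fin n → AddMonoid.End V) (c : FreeMonoid (Fin n) →₀ A) :
    phiHom e T (e.repHom c) = psiHom T c := by
  show psiHom T ((AddEquiv.ofBijective e.repHom e.repHom_bijective).symm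
    ((AddEquiv.ofBijective e.repHom e.repHom_bijective) c)) = psiHom T c
  rw [AddEquiv.symm_apply_apply]

lemma phiHom_single (T : Fin n → AddMonoid.End V) (w : FreeMonoid (Fin n)) (x : A) :
    phiHom e T (e.ι x * e.tprod w) = smulEnd x * Tprod T w := by
  rw [← e.repHom_single, phiHom_rep, psiHom_single]

lemma phiHom_one (T : Fin n → AddMonoid.End V) : phiHom e T 1 = 1 := by
  have h : (1 : e.S) = e.ι 1 * e.tprod 1 := by simp [e.tprod_one]
  rw [h, phiHom_single]
  simp [smulEnd, Tprod_one]

/-- key pointwise identity -/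
lemma T_mul_smulEnd (T : Fin n → AddMonoid.End V)
    (hT : ∀ (i : Fin n) (a : A) (v : V),
      T i (a • v) = (∑ j, σ a i j • T j v) + δ i a • v)
    (i : Fin n) (a : A) :
    T i * smulEnd a = (∑ j, smulEnd (σ a i j) * T j) + smulEnd (δ i a) := by
  refine DFunLike.ext _ _ fun v => ?_
  rw [endAdd_apply, endSum_apply]
  show T i (a • v) = _
  rw [hT i a v]
  congr 1

lemma phiHom_iota_mul (T : Fin n → AddMonoid.End V) (a : A) (s : e.S) :
    phiHom e T (e.ι a * s) = smulEnd a * phiHom e T s := by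
  obtain ⟨c, rfl⟩ := e.repHom_bijective.2 s
  rw [phiHom_rep, e.repHom_apply, psiHom_apply, Finsupp.sum, Finsupp.sum,
    Finset.mul_sum, map_sum, Finset.mul_sum]
  refine Finset.sum_congr rfl fun w _ => ?_
  rw [← mul_assoc, ← map_mul, phiHom_single, smulEnd_mul, mul_assoc]

lemma phiHom_t_mul (T : Fin n → AddMonoid.End V)
    (hT : ∀ (i : Fin n) (a : A) (v : V),
      T i (a • v) = (∑ j, σ a i j • T j v) + δ i a • v)
    (i : Fin n) (s : e.S) :
    phiHom e T (e.t i * s) = T i * phiHom e T s := by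
  obtain ⟨c, rfl⟩ := e.repHom_bijective.2 s
  rw [phiHom_rep, e.repHom_apply, psiHom_apply]
  rw [Finsupp.sum, Finsupp.sum, Finset.mul_sum, map_sum, Finset.mul_sum]
  refine Finset.sum_congr rfl fun w _ => ?_
  have key : e.t i * (e.ι (c w) * e.tprod w)
      = (∑ j, e.ι (σ (c w) i j) * e.tprod (FreeMonoid.of j * w))
        + e.ι (δ i (c w)) * e.tprod w := by
    rw [← mul_assoc, e.commute_rule, add_mul, Finset.sum_mul]
    congr 1
    refine Finset.sum_congr rfl fun j _ => ?_
    rw [e.tprod_cons, mul_assoc]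
  rw [key, map_add, map_sum, phiHom_single]
  have hj : ∀ j, phiHom e T (e.ι (σ (c w) i j) * e.tprod (FreeMonoid.of j * w))
      = smulEnd (σ (c w) i j) * (T j * Tprod T w) := by
    intro j
    rw [phiHom_single, Tprod_cons]
  simp_rw [hj]
  rw [← mul_assoc, T_mul_smulEnd T hT i (c w), add_mul, Finset.sum_mul]
  simp_rw [mul_assoc]

lemma phiHom_tprodlist_mul (T : Fin n → AddMonoid.End V)
    (hT : ∀ (i : Fin n) (a : A) (v : V),
      T i (a • v) = (∑ j, σ a i j • T j v) + δ i a • v)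
    (l : List (Fin n)) (s : e.S) :
    phiHom e T ((List.map e.t l).prod * s) = (List.map T l).prod * phiHom e T s := by
  induction l with
  | nil => simp
  | cons i l ih =>
    simp only [List.map_cons, List.prod_cons, mul_assoc]
    rw [phiHom_t_mul e T hT, ih]

lemma phiHom_mul (T : Fin n → AddMonoid.End V)
    (hT : ∀ (i : Fin n) (a : A) (v : V),
      T i (a • v) = (∑ j, σ a i j • T j v) + δ i a • v)
    (s s' : e.S) :
    phiHom e T (s * s') = phiHom e T s * phiHom e T s' := by
  obtain ⟨c, rfl⟩ := e.repHom_bijective.2 s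
  rw [phiHom_rep, e.repHom_apply, psiHom_apply, Finsupp.sum, Finsupp.sum,
    Finset.sum_mul, Finset.sum_mul, map_sum]
  refine Finset.sum_congr rfl fun w _ => ?_
  rw [mul_assoc]
  rw [phiHom_iota_mul e T (c w) (e.tprod w * s')]
  have h2 : phiHom e T (e.tprod w * s') = Tprod T w * phiHom e T s' :=
    phiHom_tprodlist_mul e T hT (FreeMonoid.toList w) s'
  rw [h2, ← mul_assoc]

/-- The ring homomorphism extending the `A`-action by `T`. -/
noncomputable def rhoHom (T : Fin n → AddMonoid.End V)
    (hT : ∀ (i : Fin n) (a : A) (v : V),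
      T i (a • v) = (∑ j, σ a i j • T j v) + δ i a • v) : e.S →+* AddMonoid.End V where
  toFun := phiHom e T
  map_one' := phiHom_one e T
  map_mul' := phiHom_mul e T hT
  map_zero' := map_zero _
  map_add' := map_add _

lemma rhoHom_iota (T : Fin n → AddMonoid.End V)
    (hT : ∀ (i : Fin n) (a : A) (v : V),
      T i (a • v) = (∑ j, σ a i j • T j v) + δ i a • v)
    (a : A) (v : V) : rhoHom e T hT (e.ι a) v = a • v := by
  have h : e.ι a = e.ι a * e.tprod 1 := by rw [e.tprod_one, mul_one]
  show phiHom e T (e.ι a) v = a • v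
  rw [h, phiHom_single, Tprod_one, mul_one, smulEnd_apply]

lemma rhoHom_t (T : Fin n → AddMonoid.End V)
    (hT : ∀ (i : Fin n) (a : A) (v : V),
      T i (a • v) = (∑ j, σ a i j • T j v) + δ i a • v)
    (i : Fin n) : rhoHom e T hT (e.t i) = T i := by
  have h : e.t i = e.ι 1 * e.tprod (FreeMonoid.of i * 1) := by
    rw [e.tprod_cons, e.tprod_one, mul_one, map_one, one_mul]
  show phiHom e T (e.t i) = T i
  rw [h, phiHom_single, Tprod_cons, Tprod_one, mul_one]
  have h1 : smulEnd (V := V) (1 : A) = 1 := by simp [smulEnd]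
  rw [h1, one_mul]

end PMT

/-- A `(σ,δ)`-pseudo-multilinear transformation on `V` is a family of additive
endomorphisms `T i` with `T i (a • v) = ∑ j, σ a i j • T j v + δ i a • v`.
PMT's on `V` correspond bijectively to left `S`-module structures on `V`
(ring homomorphisms `ρ : S → End(V,+)`) extending the given `A`-module structure,
with the correspondence determined by `ρ (t i) = T i`. -/
theorem pmt_equiv_modules {A : Type*} [Ring A] {n : ℕ}
    (σ : A →+* Matrix (Fin n) (Fin n) A) (δ : Fin n → A →+ A)
    (hδ : ∀ (i : Fin n) (a b : A), δ i (a * b) = (∑ j, σ a i j * δ j b) + δ i a * b)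
    (e : OreExtension A n σ δ)
    (V : Type*) [AddCommGroup V] [Module A V] :
    ∃ E : {T : Fin n → AddMonoid.End V //
            ∀ (i : Fin n) (a : A) (v : V),
              T i (a • v) = (∑ j, σ a i j • T j v) + δ i a • v} ≃
          {ρ : e.S →+* AddMonoid.End V // ∀ (a : A) (v : V), ρ (e.ι a) v = a • v},
      ∀ T (i : Fin n), ((E T : {ρ : e.S →+* AddMonoid.End V //
            ∀ (a : A) (v : V), ρ (e.ι a) v = a • v}) : e.S →+* AddMonoid.End V) (e.t i)
          = T.1 i := by
  classical
  have hB : ∀ (ρ : e.S →+* AddMonoid.End V),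
      (∀ (a : A) (v : V), ρ (e.ι a) v = a • v) →
      ∀ (i : Fin n) (a : A) (v : V),
        ρ (e.t i) (a • v) = (∑ j, σ a i j • ρ (e.t j) v) + δ i a • v := by
    intro ρ hρ i a v
    have h1 : ρ (e.t i * e.ι a) v = ρ (e.t i) (a • v) := by
      rw [map_mul]
      show ρ (e.t i) (ρ (e.ι a) v) = _
      rw [hρ a v]
    rw [← h1, e.commute_rule, map_add, map_sum, endAdd_apply, endSum_apply]
    congr 1
    · refine Finset.sum_congr rfl fun j _ => ?_
      rw [map_mul]
      show ρ (e.ι (σ a i j)) (ρ (e.t j) v) = _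
      rw [hρ]
    · rw [hρ]
  let B : {ρ : e.S →+* AddMonoid.End V // ∀ (a : A) (v : V), ρ (e.ι a) v = a • v} →
      {T : Fin n → AddMonoid.End V //
        ∀ (i : Fin n) (a : A) (v : V),
          T i (a • v) = (∑ j, σ a i j • T j v) + δ i a • v} :=
    fun ρ => ⟨fun i => (ρ : e.S →+* AddMonoid.End V) (e.t i), hB ρ.1 ρ.2⟩
  have hBinj : Function.Injective B := by
    intro ρ ρ' h
    have ht : ∀ i, (ρ : e.S →+* AddMonoid.End V) (e.t i)
        = (ρ' : e.S →+* AddMonoid.End V) (e.t i) := by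
      intro i
      exact congrFun (congrArg Subtype.val h) i
    apply Subtype.ext
    apply RingHom.ext
    intro s
    obtain ⟨c, rfl⟩ := e.repHom_bijective.2 s
    rw [e.repHom_apply, Finsupp.sum, map_sum, map_sum]
    refine Finset.sum_congr rfl fun w _ => ?_
    rw [map_mul, map_mul]
    have hι : (ρ : e.S →+* AddMonoid.End V) (e.ι (c w))
        = (ρ' : e.S →+* AddMonoid.End V) (e.ι (c w)) := by
      refine DFunLike.ext _ _ fun v => ?_
      rw [ρ.2, ρ'.2]
    have hlist : ∀ l : List (Fin n),
        (ρ : e.S →+* AddMonoid.End V) (List.map e.t l).prod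
          = (ρ' : e.S →+* AddMonoid.End V) (List.map e.t l).prod := by
      intro l
      induction l with
      | nil => simp
      | cons i l ih => simp only [List.map_cons, List.prod_cons, map_mul, ih, ht i]
    rw [hι]
    exact congrArg (fun x => (ρ' : e.S →+* AddMonoid.End V) (e.ι (c w)) * x)
      (hlist (FreeMonoid.toList w))
  have hBsurj : Function.Surjective B := by
    intro T
    refine ⟨⟨rhoHom e T.1 T.2, rhoHom_iota e T.1 T.2⟩, ?_⟩
    apply Subtype.ext
    funext i
    exact rhoHom_t e T.1 T.2 i
  refine ⟨(Equiv.ofBijective B ⟨hBinj, hBsurj⟩).symm, fun T i => ?_⟩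
  have h := (Equiv.ofBijective B ⟨hBinj, hBsurj⟩).apply_symm_apply T
  exact congrFun (congrArg Subtype.val h) i
end

section
/- Let T = (T_1,…,T_n) be a (σ,δ)-pseudo-multilinear transformation on a left A-module V. Then the map φ: S = A[t_1,…,t_n; σ, δ] → End(V,+) defined on a polynomial f by substituting T_i for t_i and left multiplication L_a for each coefficient a ∈ A (i.e. φ(f) = f(T)) is a ring homomorphism. -/
section PMTAux

variable {A : Type*} [Ring A] {n : ℕ}
  {σ : A →+* Matrix (Fin n) (Fin n) A} {δ : Fin n → A →+ A}
  (e : OreExtension A n σ δ)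
  {V : Type*} [AddCommGroup V] [Module A V]
  (T : Fin n → AddMonoid.End V)

/-- Monomial in `S` corresponding to a word. -/
def twS (w : FreeMonoid (Fin n)) : e.S := (List.map e.t (FreeMonoid.toList w)).prod

/-- Monomial in `End V` corresponding to a word. -/
def twT (w : FreeMonoid (Fin n)) : AddMonoid.End V := (List.map T (FreeMonoid.toList w)).prod

/-- The (unique) coefficients of an element of `S`. -/
noncomputable def coeffs (s : e.S) : FreeMonoid (Fin n) →₀ A :=
  (e.unique_repr s).choose

lemma sum_repr (s : e.S) : s = (coeffs e s).sum fun w a => e.ι a * twS e w :=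
  (e.unique_repr s).choose_spec.1

lemma coeffs_eq (s : e.S) (c : FreeMonoid (Fin n) →₀ A)
    (h : s = c.sum fun w a => e.ι a * twS e w) : coeffs e s = c :=
  ((e.unique_repr s).choose_spec.2 c h).symm

/-- The substitution map. -/
noncomputable def phi0 (s : e.S) : AddMonoid.End V :=
  (coeffs e s).sum fun w a => Module.toAddMonoidEnd A V a * twT T w

lemma coeffs_single (a : A) (w : FreeMonoid (Fin n)) :
    coeffs e (e.ι a * twS e w) = Finsupp.single w a := by
  refine coeffs_eq e _ _ ?_
  rw [Finsupp.sum_single_index (by rw [map_zero, zero_mul])]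

lemma phi0_single (a : A) (w : FreeMonoid (Fin n)) :
    phi0 e T (e.ι a * twS e w) = Module.toAddMonoidEnd A V a * twT T w := by
  rw [phi0, coeffs_single, Finsupp.sum_single_index (by rw [map_zero, zero_mul])]

lemma coeffs_add (s s' : e.S) : coeffs e (s + s') = coeffs e s + coeffs e s' := by
  refine coeffs_eq e _ _ ?_
  rw [Finsupp.sum_add_index' (fun w => by rw [map_zero, zero_mul])
    (fun w a b => by rw [map_add, add_mul]), ← sum_repr, ← sum_repr]

lemma phi0_add (s s' : e.S) : phi0 e T (s + s') = phi0 e T s + phi0 e T s' := by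
  rw [phi0, phi0, phi0, coeffs_add, Finsupp.sum_add_index'
    (fun w => by rw [map_zero, zero_mul]) (fun w a b => by rw [map_add, add_mul])]

/-- The substitution map, as an additive monoid hom. -/
noncomputable def phi : e.S →+ AddMonoid.End V := AddMonoidHom.mk' (phi0 e T) (phi0_add e T)

lemma phi_apply (s : e.S) :
    phi e T s = (coeffs e s).sum fun w a => Module.toAddMonoidEnd A V a * twT T w := rfl

lemma phi_single (a : A) (w : FreeMonoid (Fin n)) :
    phi e T (e.ι a * twS e w) = Module.toAddMonoidEnd A V a * twT T w :=
  phi0_single e T a w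

lemma phi_iota_mul (a : A) (s : e.S) :
    phi e T (e.ι a * s) = Module.toAddMonoidEnd A V a * phi e T s := by
  conv_lhs => rw [sum_repr e s]
  rw [Finsupp.sum, Finset.mul_sum, map_sum]
  rw [Finset.sum_congr rfl (fun w _ => by
    rw [← mul_assoc, ← map_mul, phi_single, map_mul, mul_assoc])]
  rw [← Finset.mul_sum, phi_apply, Finsupp.sum]

lemma phi_t_mul (hT : ∀ (i : Fin n) (a : A) (v : V),
      T i (a • v) = (∑ j, σ a i j • T j v) + δ i a • v)
    (i : Fin n) (s : e.S) :
    phi e T (e.t i * s) = T i * phi e T s := by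
  have key : ∀ b : A, T i * Module.toAddMonoidEnd A V b
      = (∑ j, Module.toAddMonoidEnd A V (σ b i j) * T j)
        + Module.toAddMonoidEnd A V (δ i b) := by
    intro b
    refine AddMonoidHom.ext fun v => ?_
    change T i (b • v) = _
    erw [AddMonoidHom.add_apply, AddMonoidHom.finset_sum_apply, hT i b v]
    exact congrArg₂ (· + ·) (Finset.sum_congr rfl fun j _ => rfl) rfl
  conv_lhs => rw [sum_repr e s]
  rw [Finsupp.sum, Finset.mul_sum, map_sum]
  rw [Finset.sum_congr rfl (fun w _ => show
      phi e T (e.t i * (e.ι (coeffs e s w) * twS e w))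
        = T i * (Module.toAddMonoidEnd A V (coeffs e s w) * twT T w) from by
    rw [← mul_assoc, e.commute_rule, add_mul, Finset.sum_mul, map_add, map_sum]
    rw [Finset.sum_congr rfl (fun j _ => show
        phi e T (e.ι (σ (coeffs e s w) i j) * e.t j * twS e w)
          = Module.toAddMonoidEnd A V (σ (coeffs e s w) i j) * (T j * twT T w) from by
      have h1 : e.ι (σ (coeffs e s w) i j) * e.t j * twS e w
          = e.ι (σ (coeffs e s w) i j) * twS e (FreeMonoid.of j * w) := by
        simp only [twS, FreeMonoid.toList_of_mul, List.map_cons, List.prod_cons, mul_assoc]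
      have h2 : twT T (FreeMonoid.of j * w) = T j * twT T w := by
        simp only [twT, FreeMonoid.toList_of_mul, List.map_cons, List.prod_cons]
      rw [h1, phi_single, h2])]
    rw [phi_single, ← mul_assoc (T i), key, add_mul, Finset.sum_mul]
    simp [mul_assoc])]
  rw [← Finset.mul_sum, phi_apply, Finsupp.sum]

lemma phi_word_mul (hT : ∀ (i : Fin n) (a : A) (v : V),
      T i (a • v) = (∑ j, σ a i j • T j v) + δ i a • v)
    (l : List (Fin n)) (a : A) (s : e.S) :
    phi e T (e.ι a * (List.map e.t l).prod * s)
      = Module.toAddMonoidEnd A V a * (List.map T l).prod * phi e T s := by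
  induction l generalizing a s with
  | nil => simp only [List.map_nil, List.prod_nil, mul_one]; exact phi_iota_mul e T a s
  | cons i l ih =>
    simp only [List.map_cons, List.prod_cons]
    rw [mul_assoc, mul_assoc, phi_iota_mul, phi_t_mul e T hT]
    have := ih 1 s
    rw [map_one, one_mul] at this
    rw [this]
    simp [mul_assoc]

lemma phi_mul (hT : ∀ (i : Fin n) (a : A) (v : V),
      T i (a • v) = (∑ j, σ a i j • T j v) + δ i a • v)
    (x y : e.S) : phi e T (x * y) = phi e T x * phi e T y := by
  conv_lhs => rw [sum_repr e x]
  rw [Finsupp.sum, Finset.sum_mul, map_sum]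
  have hterm : ∀ w ∈ (coeffs e x).support,
      phi e T (e.ι ((coeffs e x) w) * twS e w * y)
        = Module.toAddMonoidEnd A V ((coeffs e x) w) * twT T w * phi e T y :=
    fun w _ => phi_word_mul e T hT (FreeMonoid.toList w) _ _
  rw [Finset.sum_congr rfl hterm, ← Finset.sum_mul]
  rfl

lemma phi_one : phi e T 1 = 1 := by
  have h1 : (1 : e.S) = e.ι 1 * twS e 1 := by
    rw [map_one, twS]
    simp [FreeMonoid.toList_one]
  rw [h1, phi_single, map_one, one_mul, twT]
  simp [FreeMonoid.toList_one]

end PMTAux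

/-- Given a `(σ,δ)`-pseudo-multilinear transformation `T` on a left `A`-module `V`,
the substitution map `φ : S → End(V,+)`, `φ(f) = f(T)` — determined by sending each
coefficient `a ∈ A` to left multiplication by `a` and each `t i` to `T i` — is a
ring homomorphism. -/
theorem pmt_gives_ringHom {A : Type*} [Ring A] {n : ℕ}
    (σ : A →+* Matrix (Fin n) (Fin n) A) (δ : Fin n → A →+ A)
    (hδ : ∀ (i : Fin n) (a b : A), δ i (a * b) = (∑ j, σ a i j * δ j b) + δ i a * b)
    (e : OreExtension A n σ δ)
    (V : Type*) [AddCommGroup V] [Module A V]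
    (T : Fin n → AddMonoid.End V)
    (hT : ∀ (i : Fin n) (a : A) (v : V),
      T i (a • v) = (∑ j, σ a i j • T j v) + δ i a • v) :
    ∃ φ : e.S →+* AddMonoid.End V,
      (∀ (a : A) (v : V), φ (e.ι a) v = a • v) ∧ (∀ i : Fin n, φ (e.t i) = T i) := by
  refine ⟨{ toFun := phi e T
            map_one' := phi_one e T
            map_mul' := phi_mul e T hT
            map_zero' := map_zero _
            map_add' := map_add _ }, ?_, ?_⟩
  · intro a v
    have h1 : e.ι a = e.ι a * twS e 1 := by
      rw [twS]; simp [FreeMonoid.toList_one]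
    show phi e T (e.ι a) v = a • v
    rw [h1, phi_single]
    have h2 : twT T (1 : FreeMonoid (Fin n)) = 1 := by
      simp [twT, FreeMonoid.toList_one]
    rw [h2, mul_one]
    rfl
  · intro i
    show phi e T (e.t i) = T i
    have h1 : e.t i = e.ι 1 * twS e (FreeMonoid.of i) := by
      rw [map_one, one_mul, twS]
      simp [FreeMonoid.toList_of]
    rw [h1, phi_single, map_one, one_mul, twT]
    simp [FreeMonoid.toList_of]
end

section
/- Let K be a division ring with n > 1, σ: K → M_n(K) a ring homomorphism with σ(a) invertible for all a ≠ 0, and δ a σ-derivation. Then the center of S = K[t_1,…,t_n; σ, δ] equals {a ∈ Z(K) : σ(a) = a·I_n and δ_i(a) = 0 for all i}. -/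
namespace OreHelper

variable {K : Type*} [DivisionRing K] {n : ℕ}
  {σ : K →+* Matrix (Fin n) (Fin n) K} {δ : Fin n → K →+ K}

lemma of_ne_one (j : Fin n) : (FreeMonoid.of j : FreeMonoid (Fin n)) ≠ 1 := by
  intro h
  have := congrArg FreeMonoid.toList h
  simp [FreeMonoid.toList_of] at this

variable (e : OreExtension K n σ δ)

def P (w : FreeMonoid (Fin n)) : e.S := (List.map e.t (FreeMonoid.toList w)).prod

@[simp] lemma P_one : P e 1 = 1 := rfl

@[simp] lemma P_of (i : Fin n) : P e (FreeMonoid.of i) = e.t i := by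
  simp [P, FreeMonoid.toList_of]

lemma P_mul (w v : FreeMonoid (Fin n)) : P e (w * v) = P e w * P e v := by
  simp [P, FreeMonoid.toList_mul]

noncomputable def valHom : (FreeMonoid (Fin n) →₀ K) →+ e.S :=
  Finsupp.liftAddHom fun w => (AddMonoidHom.mulRight (P e w)).comp e.ι.toAddMonoidHom

lemma valHom_apply (c : FreeMonoid (Fin n) →₀ K) :
    valHom e c = c.sum fun w x => e.ι x * P e w := rfl

@[simp] lemma valHom_single (w : FreeMonoid (Fin n)) (x : K) :
    valHom e (Finsupp.single w x) = e.ι x * P e w := by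
  rw [valHom]
  simp [Finsupp.sum_single_index]

lemma valHom_inj : Function.Injective (valHom e) := by
  intro c₁ c₂ h
  obtain ⟨c, -, hu⟩ := e.unique_repr (valHom e c₁)
  have h1 := hu c₁ (valHom_apply e c₁)
  have h2 := hu c₂ (by rw [h]; exact (valHom_apply e c₂))
  rw [h1, h2]

lemma exists_valHom (s : e.S) : ∃ c, s = valHom e c := by
  obtain ⟨c, hc, -⟩ := e.unique_repr s
  exact ⟨c, hc⟩

lemma ι_inj : Function.Injective e.ι := by
  intro x y h
  have : valHom e (Finsupp.single 1 x) = valHom e (Finsupp.single 1 y) := by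
    simp [h]
  exact (Finsupp.single_injective 1) (valHom_inj e this)

/-- appending the letter `i` on the right, as an embedding of `FreeMonoid (Fin n)`. -/
def appEmb (i : Fin n) : FreeMonoid (Fin n) ↪ FreeMonoid (Fin n) :=
  ⟨fun w => w * FreeMonoid.of i, fun w₁ w₂ h => mul_right_cancel h⟩

lemma valHom_mul_t (c : FreeMonoid (Fin n) →₀ K) (i : Fin n) :
    valHom e c * e.t i = valHom e (c.embDomain (appEmb i)) := by
  rw [valHom_apply, valHom_apply, Finsupp.sum_embDomain, Finsupp.sum_mul]
  refine Finset.sum_congr rfl fun w _ => ?_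
  show e.ι (c w) * P e w * e.t i = e.ι (c w) * P e (w * FreeMonoid.of i)
  rw [P_mul, P_of, mul_assoc]

/-- the finsupp representing `t i * valHom c`. -/
noncomputable def Tmap (σ : K →+* Matrix (Fin n) (Fin n) K) (δ : Fin n → K →+ K)
    (i : Fin n) (c : FreeMonoid (Fin n) →₀ K) :
    FreeMonoid (Fin n) →₀ K :=
  c.sum fun w x =>
    (∑ j, Finsupp.single (FreeMonoid.of j * w) (σ x i j)) + Finsupp.single w (δ i x)

lemma t_mul_valHom (c : FreeMonoid (Fin n) →₀ K) (i : Fin n) :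
    e.t i * valHom e c = valHom e (Tmap σ δ i c) := by
  rw [Tmap, map_finsuppSum, valHom_apply, Finsupp.mul_sum]
  refine Finset.sum_congr rfl fun w _ => ?_
  show e.t i * (e.ι (c w) * P e w) =
    valHom e ((∑ j, Finsupp.single (FreeMonoid.of j * w) (σ (c w) i j))
      + Finsupp.single w (δ i (c w)))
  rw [map_add, map_sum, valHom_single]
  have : e.t i * (e.ι (c w) * P e w) = (e.t i * e.ι (c w)) * P e w := (mul_assoc _ _ _).symm
  rw [this, e.commute_rule, add_mul, Finset.sum_mul]
  congr 1
  refine Finset.sum_congr rfl fun j _ => ?_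
  rw [valHom_single, P_mul, P_of, mul_assoc]

end OreHelper

namespace OreHelper

variable {K : Type*} [DivisionRing K] {n : ℕ}
  {σ : K →+* Matrix (Fin n) (Fin n) K} {δ : Fin n → K →+ K}

lemma toList_inj : Function.Injective (FreeMonoid.toList : FreeMonoid (Fin n) → List (Fin n)) :=
  fun _ _ h => h

lemma support_subset_one (hn : 1 < n) (hσ : ∀ a : K, a ≠ 0 → IsUnit (σ a))
    (c : FreeMonoid (Fin n) →₀ K)
    (h : ∀ i, Tmap σ δ i c = Finsupp.embDomain (appEmb i) c) :
    c.support ⊆ {1} := by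
  intro w hw
  rw [Finset.mem_singleton]
  by_contra hw1
  obtain ⟨w0, hw0s, hw0max⟩ := Finset.exists_max_image c.support
    (fun w => (FreeMonoid.toList w).length) ⟨w, hw⟩
  have hwne : FreeMonoid.toList w ≠ [] := fun hh => hw1 (toList_inj hh)
  have hne : FreeMonoid.toList w0 ≠ [] := by
    intro hh
    have h1 := hw0max w hw
    rw [hh] at h1
    simp at h1
    exact hwne h1
  set k := (FreeMonoid.toList w0).getLast hne with hk
  have hnontriv : Nontrivial (Fin n) := Fin.nontrivial_iff_two_le.mpr hn
  obtain ⟨i, hik⟩ := exists_ne k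
  -- every entry of row i of σ (c w0) vanishes
  have hrow : ∀ j, σ (c w0) i j = 0 := by
    intro j
    have hu := congrArg (fun f => f (FreeMonoid.of j * w0)) (h i)
    -- RHS is zero
    have hnr : (FreeMonoid.of j * w0) ∉ Set.range (appEmb i) := by
      rintro ⟨w', hw'⟩
      have hl := congrArg FreeMonoid.toList hw'
      simp only [appEmb, Function.Embedding.coeFn_mk, FreeMonoid.toList_mul,
        FreeMonoid.toList_of] at hl
      have hdrop : (FreeMonoid.toList w0).dropLast ++ [k] = FreeMonoid.toList w0 :=
        List.dropLast_concat_getLast hne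
      have hl2 : FreeMonoid.toList w' ++ [i] = (j :: (FreeMonoid.toList w0).dropLast) ++ [k] := by
        rw [List.cons_append, hdrop]
        exact hl
      have := congrArg (fun l => l.getLast?) hl2
      simp only [List.getLast?_concat] at this
      exact hik (Option.some.inj this)
    rw [Finsupp.embDomain_notin_range _ _ _ hnr] at hu
    -- LHS is the matrix entry
    rw [Tmap, Finsupp.sum_apply, Finsupp.sum] at hu
    rw [Finset.sum_eq_single w0] at hu
    · rw [Finsupp.add_apply, Finsupp.finset_sum_apply] at hu
      rw [Finset.sum_eq_single j] at hu
      · rw [Finsupp.single_eq_same, Finsupp.single_eq_of_ne'] at hu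
        · simpa using hu
        · -- w0 ≠ of j * w0
          intro hh
          have := congrArg (fun l => (FreeMonoid.toList l).length) hh
          simp [FreeMonoid.toList_mul, FreeMonoid.toList_of] at this
      · intro j' _ hj'
        apply Finsupp.single_eq_of_ne'
        intro hh
        have := congrArg FreeMonoid.toList hh
        simp only [FreeMonoid.toList_mul, FreeMonoid.toList_of] at this
        exact hj' (List.cons.inj this).1
      · intro hj; exact absurd (Finset.mem_univ j) hj
    · intro w' hw's hw'ne
      rw [Finsupp.add_apply, Finsupp.finset_sum_apply]
      have h1 : ∀ j' ∈ Finset.univ, (Finsupp.single (FreeMonoid.of j' * w')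
          (σ (c w') i j')) (FreeMonoid.of j * w0) = 0 := by
        intro j' _
        apply Finsupp.single_eq_of_ne'
        intro hh
        have := congrArg FreeMonoid.toList hh
        simp only [FreeMonoid.toList_mul, FreeMonoid.toList_of] at this
        exact hw'ne (toList_inj (List.cons.inj this).2)
      rw [Finset.sum_congr rfl h1]
      simp only [Finset.sum_const_zero, zero_add]
      apply Finsupp.single_eq_of_ne'
      intro hh
      have hlen := congrArg (fun l => (FreeMonoid.toList l).length) hh
      simp only [FreeMonoid.toList_mul, FreeMonoid.toList_of, List.length_cons,
        List.length_append, List.length_singleton] at hlen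
      have := hw0max w' hw's
      simp at hlen
      omega
    · intro hws
      exact absurd hw0s hws
  -- contradiction with invertibility
  have hc0 : c w0 ≠ 0 := Finsupp.mem_support_iff.mp hw0s
  obtain ⟨N, hN⟩ := (hσ _ hc0).exists_right_inv
  have h1 := congrFun (congrFun hN i) i
  rw [Matrix.mul_apply, Matrix.one_apply_eq] at h1
  simp only [hrow, zero_mul, Finset.sum_const_zero] at h1
  exact zero_ne_one h1

end OreHelper

namespace OreHelper

variable {K : Type*} [DivisionRing K] {n : ℕ}
  {σ : K →+* Matrix (Fin n) (Fin n) K} {δ : Fin n → K →+ K}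
  (e : OreExtension K n σ δ)

lemma t_mul_ι (a : K) (hσa : σ a = a • (1 : Matrix (Fin n) (Fin n) K))
    (hδa : ∀ i, δ i a = 0) (i : Fin n) : e.t i * e.ι a = e.ι a * e.t i := by
  rw [e.commute_rule, hδa, map_zero, add_zero, hσa]
  rw [Finset.sum_eq_single i]
  · simp [Matrix.smul_apply, Matrix.one_apply]
  · intro j _ hj
    simp [Matrix.smul_apply, Matrix.one_apply, hj, Ne.symm hj]
  · intro hj; exact absurd (Finset.mem_univ i) hj

lemma prod_mul_ι (a : K) (hσa : σ a = a • (1 : Matrix (Fin n) (Fin n) K))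
    (hδa : ∀ i, δ i a = 0) (l : List (Fin n)) :
    (l.map e.t).prod * e.ι a = e.ι a * (l.map e.t).prod := by
  induction l with
  | nil => simp
  | cons j l ih =>
    rw [List.map_cons, List.prod_cons, mul_assoc, ih, ← mul_assoc,
      t_mul_ι e a hσa hδa, mul_assoc]

lemma ι_central (a : K) (hab : ∀ b : K, a * b = b * a)
    (hσa : σ a = a • (1 : Matrix (Fin n) (Fin n) K))
    (hδa : ∀ i, δ i a = 0) : e.ι a ∈ Subring.center e.S := by
  rw [Subring.mem_center_iff]
  intro g
  obtain ⟨c, rfl⟩ := exists_valHom e g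
  rw [valHom_apply, Finsupp.sum_mul, Finsupp.mul_sum]
  refine Finset.sum_congr rfl fun w _ => ?_
  show e.ι (c w) * P e w * e.ι a = e.ι a * (e.ι (c w) * P e w)
  rw [mul_assoc, P, prod_mul_ι e a hσa hδa, ← mul_assoc, ← map_mul, ← hab, map_mul,
    mul_assoc]

end OreHelper

/-- Let `K` be a division ring, `n > 1`, `σ : K → M_n(K)` a ring homomorphism with
`σ(a)` invertible for every `a ≠ 0`, and `δ` a `σ`-derivation.  The center of
`S = K[t₁,…,t_n; σ, δ]` is
`{a ∈ Z(K) : σ(a) = a Iₙ and δ_i(a) = 0 for all i}`. -/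
theorem center_of_S {K : Type*} [DivisionRing K] {n : ℕ} (hn : 1 < n)
    (σ : K →+* Matrix (Fin n) (Fin n) K) (δ : Fin n → K →+ K)
    (hδ : ∀ (i : Fin n) (a b : K), δ i (a * b) = (∑ j, σ a i j * δ j b) + δ i a * b)
    (hσ : ∀ a : K, a ≠ 0 → IsUnit (σ a))
    (e : OreExtension K n σ δ) :
    ∀ s : e.S, s ∈ Subring.center e.S ↔
      ∃ a : K, s = e.ι a ∧ (∀ b : K, a * b = b * a) ∧
        σ a = a • (1 : Matrix (Fin n) (Fin n) K) ∧ ∀ i : Fin n, δ i a = 0 := by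
  intro s
  constructor
  · intro hs
    rw [Subring.mem_center_iff] at hs
    obtain ⟨c, rfl⟩ := OreHelper.exists_valHom e s
    have hkey : ∀ i, OreHelper.Tmap σ δ i c = Finsupp.embDomain (OreHelper.appEmb i) c := by
      intro i
      apply OreHelper.valHom_inj e
      rw [← OreHelper.t_mul_valHom, ← OreHelper.valHom_mul_t]
      exact hs (e.t i)
    have hsupp := OreHelper.support_subset_one hn hσ c hkey
    have hc : c = Finsupp.single 1 (c 1) := Finsupp.support_subset_singleton.mp hsupp
    set a := c 1 with ha
    have hsa : OreHelper.valHom e c = e.ι a := by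
      rw [hc]
      simp
    -- the key single-variable equation
    have heq : ∀ i : Fin n,
        (∑ j, Finsupp.single (FreeMonoid.of j) (σ a i j)) +
          Finsupp.single (1 : FreeMonoid (Fin n)) (δ i a) =
        Finsupp.single (FreeMonoid.of i) a := by
      intro i
      have h1 := hkey i
      rw [hc] at h1
      rw [OreHelper.Tmap, Finsupp.sum_single_index, Finsupp.embDomain_single] at h1
      · have hap : OreHelper.appEmb (n := n) i 1 = FreeMonoid.of i := one_mul _
        rw [hap] at h1
        simpa using h1
      · simp
    have hδ0 : ∀ i, δ i a = 0 := by
      intro i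
      have h1 := congrArg (fun f => f (1 : FreeMonoid (Fin n))) (heq i)
      simp only [Finsupp.add_apply, Finsupp.finset_sum_apply] at h1
      rw [Finset.sum_eq_zero, Finsupp.single_eq_same,
        Finsupp.single_eq_of_ne' (OreHelper.of_ne_one i), zero_add] at h1
      · exact h1
      · intro j _
        exact Finsupp.single_eq_of_ne' (OreHelper.of_ne_one j)
    have hσ1 : σ a = a • (1 : Matrix (Fin n) (Fin n) K) := by
      ext i j
      have h1 := congrArg (fun f => f (FreeMonoid.of j)) (heq i)
      simp only [Finsupp.add_apply, Finsupp.finset_sum_apply] at h1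
      rw [Finset.sum_eq_single j, Finsupp.single_eq_same,
        Finsupp.single_eq_of_ne' (Ne.symm (OreHelper.of_ne_one j)), add_zero] at h1
      · rw [h1, Matrix.smul_apply, Matrix.one_apply]
        by_cases hij : i = j
        · subst hij; simp
        · rw [if_neg hij, smul_zero, Finsupp.single_eq_of_ne']
          exact fun hh => hij (FreeMonoid.of_injective hh)
      · intro j' _ hj'
        exact Finsupp.single_eq_of_ne' fun hh => hj' (FreeMonoid.of_injective hh)
      · intro hj; exact absurd (Finset.mem_univ j) hj
    refine ⟨a, hsa, fun b => ?_, hσ1, hδ0⟩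
    have h1 := hs (e.ι b)
    rw [hsa, ← map_mul, ← map_mul] at h1
    exact (OreHelper.ι_inj e h1).symm
  · rintro ⟨a, rfl, hab, hσa, hδa⟩
    exact OreHelper.ι_central e a hab hσa hδa
end

section
/- Let A be a ring, S = A[t_1,…,t_n; σ, δ], a ∈ A^n, and I = Σ_i S(t_i − a_i) the left ideal generated by the t_i − a_i. Define the evaluation f(a) as the unique element of A representing f + I in S/I. Then for any f ∈ S, f(a) = f(T_a)(1), where T_a = (T_{a_1},…,T_{a_n}) with T_{a_i}(x) = Σ_j σ(x)_{ij} a_j + δ_i(x). -/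
/-- Evaluation via the left ideal `I = ∑ S(t_i − a_i)`: for every `f ∈ S`,
the unique representative in `A` of `f + I` is `f(T_a)(1)`, where `T_a` is the
pseudo-multilinear transformation `T_{a_i}(x) = ∑ j σ(x)_{ij} a_j + δ_i(x)` and
`f(T_a) = φ_a(f)` for the attached ring homomorphism `φ_a : S → End(A,+)`.
Equivalently, `f − ι (φ_a f 1) ∈ I`. -/
theorem eval_eq_pmt_at_one {A : Type*} [Ring A] {n : ℕ}
    (σ : A →+* Matrix (Fin n) (Fin n) A) (δ : Fin n → A →+ A)
    (hδ : ∀ (i : Fin n) (a b : A), δ i (a * b) = (∑ j, σ a i j * δ j b) + δ i a * b)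
    (e : OreExtension A n σ δ) (a : Fin n → A)
    (φ : e.S →+* AddMonoid.End A)
    (hφι : ∀ c x : A, φ (e.ι c) x = c * x)
    (hφt : ∀ (i : Fin n) (x : A), φ (e.t i) x = (∑ j, σ x i j * a j) + δ i x) :
    ∀ f : e.S,
      f - e.ι (φ f 1) ∈
        Submodule.span e.S (Set.range fun i => e.t i - e.ι (a i)) := by
  intro f
  set I := Submodule.span e.S (Set.range fun i => e.t i - e.ι (a i)) with hI
  have hgen : ∀ i, e.t i - e.ι (a i) ∈ I := fun i => Submodule.subset_span ⟨i, rfl⟩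
  have hmul : ∀ (s : e.S) {x : e.S}, x ∈ I → s * x ∈ I := by
    intro s x hx
    simpa [smul_eq_mul] using I.smul_mem s hx
  -- closure under left multiplication by ι c
  have hiota : ∀ (c : A) (g : e.S), g - e.ι (φ g 1) ∈ I →
      e.ι c * g - e.ι (φ (e.ι c * g) 1) ∈ I := by
    intro c g hg
    have h1 : e.ι c * g - e.ι (φ (e.ι c * g) 1) = e.ι c * (g - e.ι (φ g 1)) := by
      have h0 : φ (e.ι c * g) 1 = φ (e.ι c) (φ g 1) := by rw [map_mul]; rfl
      rw [mul_sub, h0, hφι, map_mul]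
    rw [h1]; exact hmul _ hg
  -- closure under left multiplication by t i
  have ht : ∀ (i : Fin n) (g : e.S), g - e.ι (φ g 1) ∈ I →
      e.t i * g - e.ι (φ (e.t i * g) 1) ∈ I := by
    intro i g hg
    set b := φ g 1 with hb
    have h1 : e.t i * g - e.ι (φ (e.t i * g) 1)
        = e.t i * (g - e.ι b) + ∑ j, e.ι (σ b i j) * (e.t j - e.ι (a j)) := by
      have h2 : φ (e.t i * g) 1 = (∑ j, σ b i j * a j) + δ i b := by
        have h0 : φ (e.t i * g) 1 = φ (e.t i) (φ g 1) := by rw [map_mul]; rfl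
        rw [h0, ← hb, hφt]
      rw [h2, mul_sub, e.commute_rule i b]
      simp only [mul_sub, map_add, map_sum, map_mul, Finset.sum_sub_distrib]
      abel
    rw [h1]
    exact I.add_mem (hmul _ hg) (I.sum_mem fun j _ => hmul _ (hgen j))
  -- monomials
  have hone : (1 : e.S) - e.ι (φ 1 1) ∈ I := by
    simp only [map_one, AddMonoid.End.one_apply, map_one, sub_self]
    exact I.zero_mem
  have hword : ∀ l : List (Fin n),
      (l.map e.t).prod - e.ι (φ (l.map e.t).prod 1) ∈ I := by
    intro l
    induction l with
    | nil => simp only [List.map_nil, List.prod_nil]; exact hone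
    | cons i l ih =>
        simpa [List.map_cons, List.prod_cons] using ht i _ ih
  have hmono : ∀ (w : FreeMonoid (Fin n)) (x : A),
      (e.ι x * (List.map e.t (FreeMonoid.toList w)).prod)
        - e.ι (φ (e.ι x * (List.map e.t (FreeMonoid.toList w)).prod) 1) ∈ I :=
    fun w x => hiota x _ (hword _)
  obtain ⟨c, hc, -⟩ := e.unique_repr f
  rw [hc, Finsupp.sum]
  have h3 : (∑ w ∈ c.support, e.ι (c w) * (List.map e.t (FreeMonoid.toList w)).prod)
      - e.ι (φ (∑ w ∈ c.support, e.ι (c w) * (List.map e.t (FreeMonoid.toList w)).prod) 1)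
      = ∑ w ∈ c.support,
        ((e.ι (c w) * (List.map e.t (FreeMonoid.toList w)).prod)
          - e.ι (φ (e.ι (c w) * (List.map e.t (FreeMonoid.toList w)).prod) 1)) := by
    rw [map_sum φ]
    erw [AddMonoidHom.finset_sum_apply]
    rw [map_sum, Finset.sum_sub_distrib]
    rfl
  rw [h3]
  exact I.sum_mem fun w _ => hmono w (c w)
end

section
/- Let A be a ring, S = A[t_1,…,t_n; σ, δ], f, g ∈ S, and a ∈ A^n. Then (fg)(a) = f(T_a)(g(a)) (the general product formula). In particular, for g = x ∈ A a constant, (f·x)(a) = f(T_a)(x). -/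
/-- The general product formula: `(fg)(a) = f(T_a)(g(a))`, where evaluation at `a` is
taken modulo the left ideal `I = ∑ S(t_i − a_i)` and `f(T_a) = φ_a(f)` for the ring
homomorphism `φ_a : S → End(A,+)` attached to the PMT `T_a`.  Concretely: if `r_g ∈ A`
represents `g + I` then `φ_a f r_g` represents `fg + I`.  In particular for a constant
`g = x ∈ A`, `(f·x)(a) = f(T_a)(x)`. -/
theorem product_formula {A : Type*} [Ring A] {n : ℕ}
    (σ : A →+* Matrix (Fin n) (Fin n) A) (δ : Fin n → A →+ A)
    (hδ : ∀ (i : Fin n) (a b : A), δ i (a * b) = (∑ j, σ a i j * δ j b) + δ i a * b)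
    (e : OreExtension A n σ δ) (a : Fin n → A)
    (φ : e.S →+* AddMonoid.End A)
    (hφι : ∀ c x : A, φ (e.ι c) x = c * x)
    (hφt : ∀ (i : Fin n) (x : A), φ (e.t i) x = (∑ j, σ x i j * a j) + δ i x) :
    (∀ (f g : e.S) (rg : A),
        g - e.ι rg ∈ Submodule.span e.S (Set.range fun i => e.t i - e.ι (a i)) →
        f * g - e.ι (φ f rg) ∈
          Submodule.span e.S (Set.range fun i => e.t i - e.ι (a i))) ∧
    (∀ (f : e.S) (x : A),
        f * e.ι x - e.ι (φ f x) ∈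
          Submodule.span e.S (Set.range fun i => e.t i - e.ι (a i))) := by
  set I : Submodule e.S e.S :=
    Submodule.span e.S (Set.range fun i => e.t i - e.ι (a i)) with hI
  have key : ∀ f : e.S, ∀ x : A, f * e.ι x - e.ι (φ f x) ∈ I := by
    let M : Subring e.S :=
      { carrier := {f | ∀ x : A, f * e.ι x - e.ι (φ f x) ∈ I}
        one_mem' := by intro x; simp
        mul_mem' := by
          intro f g hf hg x
          have hm : φ (f * g) x = φ f (φ g x) := by rw [map_mul]; rfl
          have h1 : f * g * e.ι x - e.ι (φ (f * g) x)
              = f * (g * e.ι x - e.ι (φ g x))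
                + (f * e.ι (φ g x) - e.ι (φ f (φ g x))) := by
            rw [hm, mul_sub, mul_assoc]; abel
          rw [h1]
          exact add_mem (I.smul_mem f (hg x)) (hf (φ g x))
        add_mem' := by
          intro f g hf hg x
          have hm : φ (f + g) x = φ f x + φ g x := by rw [map_add]; rfl
          have h1 : (f + g) * e.ι x - e.ι (φ (f + g) x)
              = (f * e.ι x - e.ι (φ f x)) + (g * e.ι x - e.ι (φ g x)) := by
            rw [hm, map_add, add_mul]; abel
          rw [h1]; exact add_mem (hf x) (hg x)
        zero_mem' := by intro x; simp
        neg_mem' := by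
          intro f hf x
          have hm : φ (-f) x = -(φ f x) := by rw [map_neg]; rfl
          have h1 : (-f) * e.ι x - e.ι (φ (-f) x)
              = -(f * e.ι x - e.ι (φ f x)) := by
            rw [hm, map_neg, neg_mul]; abel
          rw [h1]; exact neg_mem (hf x) }
    have hι : ∀ c : A, e.ι c ∈ M := by
      intro c x
      simp only [← map_mul, hφι]
      simp
    have ht : ∀ i : Fin n, e.t i ∈ M := by
      intro i x
      show e.t i * e.ι x - e.ι (φ (e.t i) x) ∈ I
      rw [hφt, e.commute_rule, map_add, map_sum]
      have h1 : (∑ j, e.ι (σ x i j) * e.t j) + e.ι (δ i x)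
            - ((∑ j, e.ι (σ x i j * a j)) + e.ι (δ i x))
          = ∑ j, e.ι (σ x i j) • (e.t j - e.ι (a j)) := by
        rw [add_sub_add_right_eq_sub, ← Finset.sum_sub_distrib]
        refine Finset.sum_congr rfl fun j _ => ?_
        simp [smul_eq_mul, mul_sub, map_mul]
      rw [h1]
      exact sum_mem fun j _ => I.smul_mem _
        (Submodule.subset_span ⟨j, rfl⟩)
    intro f
    obtain ⟨c, hc, -⟩ := e.unique_repr f
    rw [hc, Finsupp.sum]
    refine sum_mem fun w _ => mul_mem (hι _) (list_prod_mem fun z hz => ?_)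
    obtain ⟨i, -, rfl⟩ := List.mem_map.mp hz
    exact ht i
  refine ⟨?_, key⟩
  intro f g rg hg
  have h1 : f * g - e.ι (φ f rg)
      = f * (g - e.ι rg) + (f * e.ι rg - e.ι (φ f rg)) := by
    rw [mul_sub]; abel
  rw [h1]
  exact add_mem (I.smul_mem f hg) (key f rg)
end

section
/- Let A be a ring, S = A[t_1,…,t_n; σ, δ], f, g ∈ S, and a ∈ A^n with x := g(a) a unit of A. Define the (σ,δ)-conjugate a^x = σ(x) a x^{-1} + δ(x) x^{-1} ∈ A^n. Then (fg)(a) = f(a^x) · g(a). -/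
/-- Product formula with conjugation: if `x := g(a)` is a unit and
`a^x = σ(x) a x⁻¹ + δ(x) x⁻¹` is the `(σ,δ)`-conjugate of `a` by `x`, then
`(fg)(a) = f(a^x) g(a)`.  Evaluations are taken as representatives modulo the
corresponding left ideals `∑ S(t_i − a_i)` and `∑ S(t_i − (a^x)_i)`. -/
theorem product_formula_conjugate {A : Type*} [Ring A] {n : ℕ}
    (σ : A →+* Matrix (Fin n) (Fin n) A) (δ : Fin n → A →+ A)
    (hδ : ∀ (i : Fin n) (a b : A), δ i (a * b) = (∑ j, σ a i j * δ j b) + δ i a * b)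
    (e : OreExtension A n σ δ) (a : Fin n → A)
    (f g : e.S) (x : Aˣ)
    (hg : g - e.ι (x : A) ∈
      Submodule.span e.S (Set.range fun i => e.t i - e.ι (a i)))
    (fb : A)
    (hfb : f - e.ι fb ∈ Submodule.span e.S (Set.range fun i =>
      e.t i - e.ι (((∑ j, σ (x : A) i j * a j) + δ i (x : A)) * (↑x⁻¹ : A)))) :
    f * g - e.ι (fb * (x : A)) ∈
      Submodule.span e.S (Set.range fun i => e.t i - e.ι (a i)) := by
  set I := Submodule.span e.S (Set.range fun i => e.t i - e.ι (a i)) with hI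
  have hgen : ∀ i, e.t i - e.ι (a i) ∈ I := fun i => Submodule.subset_span ⟨i, rfl⟩
  -- key computation: (t i - ι b i) * ι x ∈ I
  have key : ∀ i : Fin n,
      (e.t i - e.ι (((∑ j, σ (x : A) i j * a j) + δ i (x : A)) * (↑x⁻¹ : A))) * e.ι (x : A)
        ∈ I := by
    intro i
    have hb : ((∑ j, σ (x : A) i j * a j) + δ i (x : A)) * (↑x⁻¹ : A) * (x : A)
        = (∑ j, σ (x : A) i j * a j) + δ i (x : A) := by
      rw [mul_assoc, Units.inv_mul, mul_one]
    have hcalc :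
        (e.t i - e.ι (((∑ j, σ (x : A) i j * a j) + δ i (x : A)) * (↑x⁻¹ : A))) * e.ι (x : A)
          = ∑ j, e.ι (σ (x : A) i j) * (e.t j - e.ι (a j)) := by
      rw [sub_mul, e.commute_rule, ← map_mul, hb]
      simp only [mul_sub, Finset.sum_sub_distrib, ← map_mul, map_add, map_sum]
      abel
    rw [hcalc]
    exact Submodule.sum_mem _ fun j _ => Submodule.smul_mem _ (e.ι (σ (x : A) i j)) (hgen j)
  -- hence (f - ι fb) * ι x ∈ I
  have h3 : (f - e.ι fb) * e.ι (x : A) ∈ I := by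
    refine Submodule.span_induction ?_ ?_ ?_ ?_ hfb
    · rintro p ⟨i, rfl⟩; exact key i
    · simpa using I.zero_mem
    · intro p q _ _ hp hq
      rw [add_mul]; exact I.add_mem hp hq
    · intro s p _ hp
      rw [smul_eq_mul, mul_assoc]
      exact Submodule.smul_mem _ s hp
  have h1 : (f - e.ι fb) * (g - e.ι (x : A)) ∈ I := Submodule.smul_mem _ _ hg
  have h2 : e.ι fb * (g - e.ι (x : A)) ∈ I := Submodule.smul_mem _ _ hg
  have hsplit : f * g - e.ι (fb * (x : A))
      = (f - e.ι fb) * (g - e.ι (x : A)) + e.ι fb * (g - e.ι (x : A))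
        + (f - e.ι fb) * e.ι (x : A) := by
    rw [map_mul]; noncomm_ring
  rw [hsplit]
  exact I.add_mem (I.add_mem h1 h2) h3
end

section
/- Let K be a division ring, S = K[t_1,…,t_n; σ, δ], and p ∈ S a right semi-invariant polynomial. If b ∈ K^n satisfies p(b) = 0, then for every nonzero a ∈ K the (σ,δ)-conjugate b^a = σ(a) b a^{-1} + δ(a) a^{-1} also satisfies p(b^a) = 0. Hence the conjugacy class Δ(b) is contained in the zero set V(p). -/
section Aux

variable {K : Type*} [DivisionRing K] {n : ℕ}
  (σ : K →+* Matrix (Fin n) (Fin n) K) (δ : Fin n → K →+ K)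

/-- The (σ,δ)-conjugate of `b` by `a`. -/
def sdConj (a : K) (b : Fin n → K) (i : Fin n) : K :=
  ((∑ j, σ a i j * b j) + δ i a) * a⁻¹

lemma delta_one (hδ : ∀ (i : Fin n) (c d : K),
    δ i (c * d) = (∑ j, σ c i j * δ j d) + δ i c * d) (i : Fin n) : δ i 1 = 0 := by
  have h := hδ i 1 1
  simp only [mul_one, map_one, Matrix.one_apply, ite_mul, one_mul, zero_mul,
    Finset.sum_ite_eq, Finset.mem_univ, if_true] at h
  exact (left_eq_add.mp h)

lemma key_identity (e : OreExtension K n σ δ) {a : K} (ha : a ≠ 0) (b : Fin n → K)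
    (i : Fin n) :
    (e.t i - e.ι (sdConj σ δ a b i)) * e.ι a
      = ∑ j, e.ι (σ a i j) * (e.t j - e.ι (b j)) := by
  rw [sub_mul, e.commute_rule, ← map_mul]
  have h1 : sdConj σ δ a b i * a = (∑ j, σ a i j * b j) + δ i a := by
    rw [sdConj, mul_assoc, inv_mul_cancel₀ ha, mul_one]
  rw [h1]
  simp only [map_add, map_sum, map_mul, mul_sub, Finset.sum_sub_distrib]
  abel

lemma sdConj_inv (hδ : ∀ (i : Fin n) (c d : K),
    δ i (c * d) = (∑ j, σ c i j * δ j d) + δ i c * d)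
    {a : K} (ha : a ≠ 0) (b : Fin n → K) :
    sdConj σ δ a⁻¹ (sdConj σ δ a b) = b := by
  funext j
  have hmat : ∀ k, (∑ i, σ a⁻¹ j i * σ a i k) = if j = k then 1 else 0 := by
    intro k
    have h1 : σ a⁻¹ * σ a = 1 := by rw [← map_mul, inv_mul_cancel₀ ha, map_one]
    calc (∑ i, σ a⁻¹ j i * σ a i k) = (σ a⁻¹ * σ a) j k := (Matrix.mul_apply).symm
      _ = (1 : Matrix (Fin n) (Fin n) K) j k := by rw [h1]
      _ = if j = k then 1 else 0 := Matrix.one_apply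
  have hdel : (∑ i, σ a⁻¹ j i * δ i a) = - (δ j a⁻¹ * a) := by
    have h := hδ j a⁻¹ a
    rw [inv_mul_cancel₀ ha, delta_one σ δ hδ j] at h
    exact eq_neg_of_add_eq_zero_left h.symm
  have hsum : (∑ i, σ a⁻¹ j i * sdConj σ δ a b i)
      = (b j - δ j a⁻¹ * a) * a⁻¹ := by
    have step : ∀ i, σ a⁻¹ j i * sdConj σ δ a b i
        = ((∑ k, σ a⁻¹ j i * (σ a i k * b k)) + σ a⁻¹ j i * δ i a) * a⁻¹ := by
      intro i
      rw [sdConj, ← mul_assoc, mul_add, Finset.mul_sum]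
    calc (∑ i, σ a⁻¹ j i * sdConj σ δ a b i)
        = ((∑ i, ((∑ k, σ a⁻¹ j i * (σ a i k * b k)) + σ a⁻¹ j i * δ i a))) * a⁻¹ := by
          rw [Finset.sum_congr rfl fun i _ => step i, Finset.sum_mul]
      _ = ((∑ i, ∑ k, σ a⁻¹ j i * (σ a i k * b k)) + ∑ i, σ a⁻¹ j i * δ i a) * a⁻¹ := by
          rw [Finset.sum_add_distrib]
      _ = (b j - δ j a⁻¹ * a) * a⁻¹ := by
          rw [hdel, Finset.sum_comm]
          congr 1
          have : ∀ k, (∑ i, σ a⁻¹ j i * (σ a i k * b k))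
              = (if j = k then 1 else 0) * b k := by
            intro k
            rw [← hmat k, Finset.sum_mul]
            exact Finset.sum_congr rfl fun i _ => (mul_assoc _ _ _).symm
          rw [Finset.sum_congr rfl fun k _ => this k]
          simp [Finset.sum_ite_eq, sub_eq_add_neg]
  rw [sdConj, hsum, inv_inv, sub_mul, mul_assoc (δ j a⁻¹), mul_inv_cancel₀ ha, mul_one,
    sub_add_cancel, mul_assoc, inv_mul_cancel₀ ha, mul_one]

/-- Right multiplication by `ι a` maps the ideal of the conjugate into the ideal of `b`. -/
lemma rmul_mem (e : OreExtension K n σ δ) {a : K} (ha : a ≠ 0) (b : Fin n → K)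
    {m : e.S}
    (hm : m ∈ Submodule.span e.S (Set.range fun i => e.t i - e.ι (sdConj σ δ a b i))) :
    m * e.ι a ∈ Submodule.span e.S (Set.range fun i => e.t i - e.ι (b i)) := by
  set Ib := Submodule.span e.S (Set.range fun i => e.t i - e.ι (b i)) with hIb
  induction hm using Submodule.span_induction with
  | mem x hx =>
      obtain ⟨i, rfl⟩ := hx
      rw [key_identity σ δ e ha b i]
      exact Submodule.sum_mem _ fun j _ =>
        Submodule.smul_mem _ (e.ι (σ a i j)) (Submodule.subset_span ⟨j, rfl⟩)
  | zero => simp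
  | add x y _ _ hx hy => rw [add_mul]; exact Submodule.add_mem _ hx hy
  | smul s x _ hx =>
      have : (s • x) * e.ι a = s • (x * e.ι a) := by
        simp [smul_eq_mul, mul_assoc]
      rw [this]; exact Submodule.smul_mem _ s hx

/-- Division: every element is congruent to a constant modulo the left ideal. -/
lemma reduce (e : OreExtension K n σ δ) (c : Fin n → K) (s : e.S) :
    ∃ k : K, s - e.ι k ∈ Submodule.span e.S (Set.range fun i => e.t i - e.ι (c i)) := by
  set I := Submodule.span e.S (Set.range fun i => e.t i - e.ι (c i)) with hI
  have hgen : ∀ i, e.t i - e.ι (c i) ∈ I := fun i => Submodule.subset_span ⟨i, rfl⟩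
  have hmono : ∀ w : List (Fin n), ∃ k : K, (List.map e.t w).prod - e.ι k ∈ I := by
    intro w
    induction w with
    | nil => exact ⟨1, by simp⟩
    | cons i w ih =>
        obtain ⟨k, hk⟩ := ih
        refine ⟨(∑ j, σ k i j * c j) + δ i k, ?_⟩
        have hsplit : (List.map e.t (i :: w)).prod - e.ι ((∑ j, σ k i j * c j) + δ i k)
            = e.t i * ((List.map e.t w).prod - e.ι k)
              + (((∑ j, e.ι (σ k i j) * e.t j) + e.ι (δ i k))
                  - e.ι ((∑ j, σ k i j * c j) + δ i k)) := by
          rw [List.map_cons, List.prod_cons, mul_sub, ← e.commute_rule i k]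
          abel
        rw [hsplit]
        refine Submodule.add_mem _ (Submodule.smul_mem _ (e.t i) hk) ?_
        have h2 : ((∑ j, e.ι (σ k i j) * e.t j) + e.ι (δ i k))
            - e.ι ((∑ j, σ k i j * c j) + δ i k)
            = ∑ j, e.ι (σ k i j) * (e.t j - e.ι (c j)) := by
          simp only [map_add, map_sum, map_mul, mul_sub, Finset.sum_sub_distrib]
          abel
        rw [h2]
        exact Submodule.sum_mem _ fun j _ =>
          Submodule.smul_mem _ (e.ι (σ k i j)) (hgen j)
  choose kf hkf using hmono
  obtain ⟨cf, hs, -⟩ := e.unique_repr s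
  refine ⟨∑ w ∈ cf.support, cf w * kf (FreeMonoid.toList w), ?_⟩
  rw [hs, Finsupp.sum, map_sum, ← Finset.sum_sub_distrib]
  refine Submodule.sum_mem _ fun w _ => ?_
  have : e.ι (cf w) * (List.map e.t (FreeMonoid.toList w)).prod
      - e.ι (cf w * kf (FreeMonoid.toList w))
      = e.ι (cf w) • ((List.map e.t (FreeMonoid.toList w)).prod
          - e.ι (kf (FreeMonoid.toList w))) := by
    simp [smul_eq_mul, mul_sub, map_mul]
  rw [this]
  exact Submodule.smul_mem _ _ (hkf (FreeMonoid.toList w))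

end Aux

/-- Let `K` be a division ring and `p ∈ S = K[t;σ,δ]` a right semi-invariant
polynomial.  If `b ∈ Kⁿ` is a root of `p` (i.e. `p` lies in the left ideal
`∑ S(t_i − b_i)`), then every `(σ,δ)`-conjugate `b^a = σ(a) b a⁻¹ + δ(a) a⁻¹`
(`a ≠ 0`) is also a root of `p`; hence `Δ(b) ⊆ V(p)`. -/
theorem semiInvariant_roots_closed_under_conjugation {K : Type*} [DivisionRing K]
    {n : ℕ}
    (σ : K →+* Matrix (Fin n) (Fin n) K) (δ : Fin n → K →+ K)
    (hδ : ∀ (i : Fin n) (c d : K), δ i (c * d) = (∑ j, σ c i j * δ j d) + δ i c * d)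
    (e : OreExtension K n σ δ) (p : e.S)
    (hsi : ∀ a : K, ∃ a' : K, p * e.ι a = e.ι a' * p)
    (b : Fin n → K)
    (hb : p ∈ Submodule.span e.S (Set.range fun i => e.t i - e.ι (b i))) :
    ∀ a : K, a ≠ 0 →
      p ∈ Submodule.span e.S (Set.range fun i =>
        e.t i - e.ι (((∑ j, σ a i j * b j) + δ i a) * a⁻¹)) := by
  intro a ha
  show p ∈ Submodule.span e.S (Set.range fun i => e.t i - e.ι (sdConj σ δ a b i))
  set c : Fin n → K := sdConj σ δ a b with hc
  set Ic := Submodule.span e.S (Set.range fun i => e.t i - e.ι (c i)) with hIc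
  set Ib := Submodule.span e.S (Set.range fun i => e.t i - e.ι (b i)) with hIb
  obtain ⟨k, hk⟩ := reduce σ δ e c p
  by_cases hk0 : k = 0
  · simpa [hk0] using hk
  · obtain ⟨a', ha'⟩ := hsi a
    have h1 : (p - e.ι k) * e.ι a ∈ Ib := rmul_mem σ δ e ha b hk
    have h2 : p * e.ι a ∈ Ib := by
      rw [ha']
      exact Submodule.smul_mem _ (e.ι a') hb
    have h3 : e.ι (k * a) ∈ Ib := by
      have h4 := Submodule.sub_mem _ h2 h1
      have : p * e.ι a - (p - e.ι k) * e.ι a = e.ι (k * a) := by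
        rw [sub_mul, map_mul]; abel
      rwa [this] at h4
    have hka : k * a ≠ 0 := mul_ne_zero hk0 ha
    have hone : (1 : e.S) ∈ Ib := by
      have h5 := Submodule.smul_mem Ib (e.ι (k * a)⁻¹) h3
      rwa [smul_eq_mul, ← map_mul, inv_mul_cancel₀ hka, map_one] at h5
    have hIbc : ∀ m ∈ Ib, m * e.ι a⁻¹ ∈ Ic := by
      intro m hm
      have hbc : sdConj σ δ a⁻¹ c = b := by rw [hc]; exact sdConj_inv σ δ hδ ha b
      refine rmul_mem σ δ e (inv_ne_zero ha) c ?_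
      rw [hbc]; exact hm
    have h6 : e.ι a⁻¹ ∈ Ic := by simpa using hIbc 1 hone
    have h7 : (1 : e.S) ∈ Ic := by
      have h8 := Submodule.smul_mem Ic (e.ι a) h6
      rwa [smul_eq_mul, ← map_mul, mul_inv_cancel₀ ha, map_one] at h8
    have h9 := Submodule.smul_mem Ic p h7
    rwa [smul_eq_mul, mul_one] at h9
end
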